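/- For 1 < p < ∞, the operator norm of U(s,r,s) on ℓ_p satisfies (|r|^p + 2|s|^p)^{1/p} ≤ ‖U(s,r,s)‖. -/

import Mathlib

open scoped ENNReal

/-- The tridiagonal operator U(s,r,s) acting on sequences, with x_{-1} = 0. -/
noncomputable def Ufun (s r : ℂ) (x : ℕ → ℂ) : ℕ → ℂ :=
  fun k => (if k = 0 then 0 else s * x (k - 1)) + r * x k + s * x (k + 1)

/-- Lower bound for the operator norm of U(s,r,s) on ℓ_p:
any bound C for the operator satisfies (|r|^p + 2|s|^p)^{1/p} ≤ C. -/
theorem stmt1 (s r : ℂ) (p : ℝ≥0∞) (hp : 1 < p) (hp' : p ≠ ∞) (C : ℝ)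
    (hC : ∀ x : lp (fun _ : ℕ => ℂ) p,
      ∃ h : Memℓp (Ufun s r ↑x) p,
        ‖(⟨Ufun s r ↑x, h⟩ : lp (fun _ : ℕ => ℂ) p)‖ ≤ C * ‖x‖) :
    (‖r‖ ^ p.toReal + 2 * ‖s‖ ^ p.toReal) ^ (1 / p.toReal) ≤ C := by
  have hpt : 0 < p.toReal := ENNReal.toReal_pos (zero_lt_one.trans hp).ne' hp'
  set x : lp (fun _ : ℕ => ℂ) p := lp.single p 1 (1 : ℂ) with hx
  have hxnorm : ‖x‖ = 1 := by
    have := lp.norm_single (E := fun _ : ℕ => ℂ) (zero_lt_one.trans hp) 1 (1 : ℂ)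
    simpa using this
  obtain ⟨h, hle⟩ := hC x
  have hxval : ∀ k : ℕ, (↑x : ℕ → ℂ) k = if k = 1 then 1 else 0 := by
    intro k
    by_cases hk : k = 1
    · subst hk; simp [hx, lp.single_apply_self]
    · simp only [hx, if_neg hk]
      exact lp.single_apply_ne (E := fun _ : ℕ => ℂ) p 1 (1 : ℂ) hk
  have hU : Ufun s r ↑x = fun k =>
      if k = 0 then s else if k = 1 then r else if k = 2 then s else 0 := by
    funext k
    simp only [Ufun, hxval]
    match k with
    | 0 => simp
    | 1 => simp
    | 2 => simp
    | (n+3) => simp [Nat.succ_ne_zero]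
  have hnorm : ‖(⟨Ufun s r ↑x, h⟩ : lp (fun _ : ℕ => ℂ) p)‖ =
      (‖r‖ ^ p.toReal + 2 * ‖s‖ ^ p.toReal) ^ (1 / p.toReal) := by
    rw [lp.norm_eq_tsum_rpow hpt]
    congr 1
    have hts : (∑' k : ℕ, ‖(⟨Ufun s r ↑x, h⟩ : lp (fun _ : ℕ => ℂ) p) k‖ ^ p.toReal)
        = ∑ k ∈ ({0, 1, 2} : Finset ℕ), ‖Ufun s r (↑x) k‖ ^ p.toReal := by
      refine tsum_eq_sum ?_
      intro k hk
      simp only [Finset.mem_insert, Finset.mem_singleton, not_or] at hk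
      have : Ufun s r (↑x) k = 0 := by
        rw [hU]; simp [hk.1, hk.2.1, hk.2.2]
      show ‖Ufun s r (↑x) k‖ ^ p.toReal = 0
      rw [this]; simp [Real.zero_rpow hpt.ne']
    rw [hts, hU]
    norm_num
    ring
  rw [hnorm, hxnorm, mul_one] at hle
  exact hle
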